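/- Let Ω be a compact Riemannian manifold with boundary, ḡ and g = ḡ + h metrics inducing the same metric on ∂Ω, with unit normals ν̄ (for ḡ) and ν (for g), and mean curvatures H_ḡ, H_g. Then 2(H_g · g(ν,ν̄) - H_ḡ · g(ν̄,ν̄)) = -Σ_{a=1}^{n-1} (2 (D̄_{e_a} h)(e_a, ν̄) - (D̄_{ν̄} h)(e_a, e_a)), where {e_a} is a local orthonormal frame on ∂Ω and D̄ is the ḡ-Levi-Civita connection. -/
import Mathlib


open scoped RealInnerProductSpace

/-- Pointwise identity at a boundary point (V the ambient tangent space, ḡ the inner product,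
`g = ḡ + h` inducing the same metric on `∂Ω`, `{e_a}` an orthonormal tangent frame, `νb`/`ν`
the unit outward normals, `Dh X Y Z = (D̄_X h)(Y,Z)`, and `Γ = D - D̄` the connection
difference tensor): from `H_g ν - H_ḡ νb = -Σ_a Γ(e_a,e_a)` one gets
`2(H_g g(ν,νb) - H_ḡ g(νb,νb)) = -Σ_a (2(D̄_{e_a}h)(e_a,νb) - (D̄_{νb}h)(e_a,e_a))`. -/
theorem stmt4 (n : ℕ) (hn : 2 ≤ n)
    (V : Type) [NormedAddCommGroup V] [InnerProductSpace ℝ V] [FiniteDimensional ℝ V]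
    (hdim : Module.finrank ℝ V = n)
    (e : Fin (n - 1) → V) (νb ν : V)
    (he : ∀ a b, ⟪e a, e b⟫ = if a = b then (1 : ℝ) else 0)
    (hνb : ⟪νb, νb⟫ = (1 : ℝ)) (heνb : ∀ a, ⟪e a, νb⟫ = (0 : ℝ))
    (h : V →ₗ[ℝ] V →ₗ[ℝ] ℝ) (hsymm : ∀ x y, h x y = h y x)
    (htan : ∀ a b, h (e a) (e b) = 0)
    (g : V → V → ℝ) (hg : ∀ x y, g x y = ⟪x, y⟫ + h x y)
    (Dh : V → V → V → ℝ) (hDhsymm : ∀ X Y Z, Dh X Y Z = Dh X Z Y)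
    (Γ : V → V → V)
    (hΓ : ∀ X Y Z, g (Γ X Y) Z =
      (1 / 2) * (Dh X Y Z + Dh Y X Z - Dh Z X Y))
    (Hg Hgbar : ℝ)
    (hmc : Hg • ν - Hgbar • νb = -∑ a, Γ (e a) (e a)) :
    2 * (Hg * g ν νb - Hgbar * g νb νb) =
      -∑ a, (2 * Dh (e a) (e a) νb - Dh νb (e a) (e a)) := by
  have key : g (Hg • ν - Hgbar • νb) νb = g (-∑ a, Γ (e a) (e a)) νb := by rw [hmc]
  have lhs : g (Hg • ν - Hgbar • νb) νb = Hg * g ν νb - Hgbar * g νb νb := by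
    simp [hg, inner_sub_left, inner_smul_left, real_inner_smul_left, map_sub, map_smul]
    ring
  have expand : g (-∑ a, Γ (e a) (e a)) νb = -∑ a, g (Γ (e a) (e a)) νb := by
    simp only [hg, inner_neg_left, sum_inner, map_neg, map_sum, LinearMap.neg_apply,
      LinearMap.sum_apply]
    rw [← neg_add, ← Finset.sum_add_distrib]
  rw [lhs, expand] at key
  rw [key, mul_neg, Finset.mul_sum]
  congr 1
  refine Finset.sum_congr rfl fun a _ => ?_
  rw [hΓ]
  ring
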